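/- A semifilter S on ω is co-meager in 2^ω if and only if S contains a semifilter that is a Gδ subset of 2^ω. -/

import Mathlib

namespace CGaux

def cyl (t : ℕ → Bool) (M : ℕ) : Set (ℕ → Bool) := {Y | ∀ i < M, Y i = t i}

lemma isOpen_cyl (t : ℕ → Bool) (M : ℕ) : IsOpen (cyl t M) := by
  have h : cyl t M = ⋂ i : Fin M, {Y : ℕ → Bool | Y i = t i} := by
    ext Y
    simp only [cyl, Set.mem_setOf_eq, Set.mem_iInter]
    exact ⟨fun h i => h i i.2, fun h i hi => h ⟨i, hi⟩⟩
  rw [h]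
  refine isOpen_iInter_of_finite fun i => ?_
  show IsOpen ((fun Y : ℕ → Bool => Y (i : ℕ)) ⁻¹' {t (i : ℕ)})
  exact (isOpen_discrete _).preimage (continuous_apply (i : ℕ))

lemma cyl_mono (t : ℕ → Bool) {M M' : ℕ} (h : M ≤ M') : cyl t M' ⊆ cyl t M :=
  fun Y hY i hi => hY i (lt_of_lt_of_le hi h)

lemma cyl_congr {t t' : ℕ → Bool} {M : ℕ} (h : ∀ i < M, t i = t' i) :
    cyl t M = cyl t' M := by
  ext Y
  constructor <;> intro hY i hi
  · rw [hY i hi, h i hi]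
  · rw [hY i hi, h i hi]

lemma exists_cyl_subset (D : Set (ℕ → Bool)) (hDo : IsOpen D) (hDd : Dense D)
    (s : ℕ → Bool) (m : ℕ) :
    ∃ t M, m < M ∧ (∀ i < m, t i = s i) ∧ cyl t M ⊆ D := by
  obtain ⟨x, hxc, hxD⟩ := hDd.inter_open_nonempty (cyl s m) (isOpen_cyl s m)
    ⟨s, fun i _ => rfl⟩
  obtain ⟨I, u, h1, h2⟩ := isOpen_pi_iff.mp hDo x hxD
  refine ⟨x, max (m + 1) (I.sup id + 1),
    lt_of_lt_of_le (Nat.lt_succ_self m) (le_max_left _ _), fun i hi => hxc i hi, ?_⟩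
  intro Y hY
  apply h2
  intro i hi
  have h3 : (i : ℕ) ≤ I.sup id := Finset.le_sup (f := id) hi
  have h4 : i < max (m + 1) (I.sup id + 1) :=
    lt_of_le_of_lt h3 (lt_of_lt_of_le (Nat.lt_succ_self _) (le_max_right _ _))
  rw [hY i h4]
  exact (h1 i hi).2

lemma exists_uniform (D : Set (ℕ → Bool)) (hDo : IsOpen D) (hDd : Dense D) (m : ℕ) :
    ∃ M, m < M ∧ ∀ s : ℕ → Bool, ∃ t, (∀ i < m, t i = s i) ∧ cyl t M ⊆ D := by
  choose t M hM h1 h2 using fun p : Fin m → Bool =>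
    exists_cyl_subset D hDo hDd (fun i => if h : i < m then p ⟨i, h⟩ else false) m
  refine ⟨(m + 1) + Finset.univ.sup M, by omega, fun s => ?_⟩
  set p : Fin m → Bool := fun i => s i with hp
  refine ⟨t p, fun i hi => ?_, ?_⟩
  · rw [h1 p i hi]; simp [hi, hp]
  · refine (cyl_mono _ ?_).trans (h2 p)
    exact le_trans (Finset.le_sup (Finset.mem_univ p)) (Nat.le_add_left _ _)

lemma exists_scale (E : ℕ → Set (ℕ → Bool)) (hEo : ∀ n, IsOpen (E n))
    (hEd : ∀ n, Dense (E n)) :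
    ∃ a : ℕ → ℕ, a 0 = 0 ∧ StrictMono a ∧
      ∀ (k : ℕ) (s : ℕ → Bool), ∃ t, (∀ i < a k, t i = s i) ∧ cyl t (a (k + 1)) ⊆ E k := by
  have hB : ∀ k m, ∃ M, m < M ∧ ∀ s : ℕ → Bool, ∃ t, (∀ i < m, t i = s i) ∧ cyl t M ⊆ E k :=
    fun k m => exists_uniform (E k) (hEo k) (hEd k) m
  choose F hF1 hF2 using hB
  refine ⟨fun n => Nat.rec 0 (fun k ak => F k ak) n, rfl, ?_, ?_⟩
  · exact strictMono_nat_of_lt_succ fun k => hF1 k _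
  · exact fun k s => hF2 k _ s


lemma exists_generic (E : ℕ → Set (ℕ → Bool)) (a : ℕ → ℕ) (ham : StrictMono a)
    (hP : ∀ (k : ℕ) (s : ℕ → Bool), ∃ t, (∀ i < a k, t i = s i) ∧ cyl t (a (k + 1)) ⊆ E k)
    (Y : ℕ → Bool)
    (hY : ∀ m, ∃ k, m ≤ k ∧ ∀ i, a k ≤ i → i < a (k + 1) → Y i = true) :
    ∃ X : ℕ → Bool, (∀ i, X i = true → Y i = true) ∧ ∀ n, ∃ k, n ≤ k ∧ X ∈ E k := by
  choose K hK1 hK2 using hY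
  choose T hT1 hT2 using hP
  let step : (ℕ → Bool) × ℕ → (ℕ → Bool) × ℕ := fun p =>
    (fun i => if i < a (K (p.2 + 1) + 1) then
        T (K (p.2 + 1)) (fun i => if i < a (p.2 + 1) then p.1 i else false) i
      else false, K (p.2 + 1))
  let st : ℕ → (ℕ → Bool) × ℕ := fun j => Nat.rec
    ((fun i => if i < a (K 0 + 1) then T (K 0) (fun _ => false) i else false), K 0)
    (fun _ s => step s) j
  have hst_succ : ∀ j, st (j + 1) = step (st j) := fun j => rfl
  have hst_zero : st 0 =
      ((fun i => if i < a (K 0 + 1) then T (K 0) (fun _ => false) i else false), K 0) := rfl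
  have hk_succ : ∀ j, (st (j + 1)).2 = K ((st j).2 + 1) := fun j => rfl
  have hkmono : ∀ j, (st j).2 < (st (j + 1)).2 := by
    intro j
    rw [hk_succ j]
    exact lt_of_lt_of_le (Nat.lt_succ_self _) (hK1 _)
  have hkmono' : Monotone fun j => (st j).2 :=
    monotone_nat_of_le_succ fun j => le_of_lt (hkmono j)
  have hkge : ∀ j, j ≤ (st j).2 := by
    intro j
    induction j with
    | zero => exact Nat.zero_le _
    | succ n ih =>
      rw [hk_succ n]
      exact le_trans (Nat.succ_le_succ ih) (hK1 _)
  have htrue : ∀ j i, (st j).1 i = true → Y i = true := by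
    intro j
    induction j with
    | zero =>
      intro i h
      rw [hst_zero] at h
      dsimp only at h
      by_cases h1 : i < a (K 0 + 1)
      · rw [if_pos h1] at h
        rcases lt_or_ge i (a (K 0)) with h2 | h2
        · rw [hT1 (K 0) (fun _ => false) i h2] at h; exact absurd h (by simp)
        · exact hK2 0 i h2 h1
      · rw [if_neg h1] at h
        exact absurd h (by simp)
    | succ n ih =>
      intro i h
      rw [hst_succ n] at h
      simp only [step] at h
      by_cases h1 : i < a (K ((st n).2 + 1) + 1)
      · rw [if_pos h1] at h
        rcases lt_or_ge i (a (K ((st n).2 + 1))) with h2 | h2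
        · rw [hT1 _ _ i h2] at h
          by_cases h3 : i < a ((st n).2 + 1)
          · rw [if_pos h3] at h; exact ih i h
          · rw [if_neg h3] at h; exact absurd h (by simp)
        · exact hK2 _ i h2 h1
      · rw [if_neg h1] at h; exact absurd h (by simp)
  have hagree : ∀ j, ∀ i, i < a ((st j).2 + 1) → (st (j + 1)).1 i = (st j).1 i := by
    intro j i hi
    have hk' : (st j).2 + 1 ≤ K ((st j).2 + 1) := hK1 _
    have h2 : i < a (K ((st j).2 + 1)) := lt_of_lt_of_le hi (ham.monotone hk')
    have h1 : i < a (K ((st j).2 + 1) + 1) :=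
      lt_of_lt_of_le h2 (ham.monotone (Nat.le_succ _))
    rw [hst_succ j]
    simp only [step, if_pos h1]
    rw [hT1 _ _ i h2, if_pos hi]
  have hcyl : ∀ j, cyl ((st j).1) (a ((st j).2 + 1)) ⊆ E ((st j).2) := by
    intro j
    cases j with
    | zero =>
      have he : cyl ((st 0).1) (a (K 0 + 1)) = cyl (T (K 0) (fun _ => false)) (a (K 0 + 1)) :=
        cyl_congr (fun i hi => by rw [hst_zero]; dsimp only; rw [if_pos hi])
      exact he ▸ hT2 (K 0) (fun _ => false)
    | succ n =>
      have he : cyl ((st (n + 1)).1) (a (K ((st n).2 + 1) + 1)) =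
          cyl (T (K ((st n).2 + 1)) (fun i => if i < a ((st n).2 + 1) then (st n).1 i else false))
            (a (K ((st n).2 + 1) + 1)) :=
        cyl_congr (fun i hi => by rw [hst_succ n]; simp only [step, if_pos hi])
      exact he ▸ hT2 _ _
  have hchain : ∀ j j', j ≤ j' → ∀ i, i < a ((st j).2 + 1) → (st j').1 i = (st j).1 i := by
    intro j j' hj
    induction j' , hj using Nat.le_induction with
    | base => intro i _; rfl
    | succ n hn ih =>
      intro i hi
      have h2 : i < a ((st n).2 + 1) :=
        lt_of_lt_of_le hi (ham.monotone (Nat.succ_le_succ (hkmono' hn)))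
      rw [hagree n i h2, ih i hi]
  refine ⟨fun i => (st i).1 i, ?_, ?_⟩
  · intro i h
    exact htrue i i h
  · intro n
    refine ⟨(st n).2, hkge n, hcyl n ?_⟩
    intro i hi
    rcases le_or_gt i n with h | h
    · have hii : i < a ((st i).2 + 1) :=
        lt_of_lt_of_le (Nat.lt_succ_of_le (hkge i)) (ham.le_apply)
      exact (hchain i n h i hii).symm ▸ rfl
    · exact hchain n i (le_of_lt h) i hi

end CGaux

open CGaux

def AlmostSubC (X Y : ℕ → Bool) : Prop :=
  ({n | X n = true} \ {n | Y n = true}).Finite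

def IsSemifilterC (S : Set (ℕ → Bool)) : Prop :=
  S.Nonempty ∧ S ≠ Set.univ ∧ ∀ X Y : ℕ → Bool, X ∈ S → AlmostSubC X Y → Y ∈ S

/-- A semifilter is co-meager in `2^ω` iff it contains a `Gδ` semifilter. -/
theorem comeager_iff_contains_gdelta (S : Set (ℕ → Bool)) (hS : IsSemifilterC S) :
    IsMeagre Sᶜ ↔ ∃ G : Set (ℕ → Bool), G ⊆ S ∧ IsSemifilterC G ∧ IsGδ G := by
  constructor
  · intro hM
    rw [IsMeagre, compl_compl, mem_residual_iff] at hM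
    obtain ⟨𝒮, ho, hd, hct, hsub⟩ := hM
    obtain ⟨D, hD⟩ := (hct.insert Set.univ).exists_eq_range ⟨Set.univ, Set.mem_insert _ _⟩
    have hDo : ∀ n, IsOpen (D n) := by
      intro n
      have : D n ∈ insert Set.univ 𝒮 := hD ▸ Set.mem_range_self n
      rcases this with h | h
      · rw [h]; exact isOpen_univ
      · exact ho _ h
    have hDd : ∀ n, Dense (D n) := by
      intro n
      have : D n ∈ insert Set.univ 𝒮 := hD ▸ Set.mem_range_self n
      rcases this with h | h
      · rw [h]; exact dense_univ
      · exact hd _ h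
    have hDsub : (⋂ n, D n) ⊆ S := by
      rw [← Set.sInter_range, ← hD, Set.sInter_insert]
      exact (Set.inter_subset_right).trans hsub
    set E : ℕ → Set (ℕ → Bool) := fun k => ⋂ i ∈ Set.Iic k, D i with hE
    have hEo : ∀ k, IsOpen (E k) := fun k =>
      (Set.finite_Iic k).isOpen_biInter fun i _ => hDo i
    have hEd : ∀ k, Dense (E k) := fun k =>
      dense_biInter_of_isOpen (fun i _ => hDo i) (Set.to_countable _) (fun i _ => hDd i)
    obtain ⟨a, ha0, ham, hP⟩ := exists_scale E hEo hEd
    refine ⟨{Y | ∀ m, ∃ k, m ≤ k ∧ ∀ i, a k ≤ i → i < a (k + 1) → Y i = true},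
      ?_, ⟨?_, ?_, ?_⟩, ?_⟩
    · -- G ⊆ S
      intro Y hY
      obtain ⟨X, hXY, hXE⟩ := exists_generic E a ham hP Y hY
      have hXS : X ∈ S := by
        apply hDsub
        rw [Set.mem_iInter]
        intro n
        obtain ⟨k, hk, hXk⟩ := hXE n
        rw [hE] at hXk
        simp only [Set.mem_iInter] at hXk
        exact hXk n hk
      refine hS.2.2 X Y hXS ?_
      have : {n | X n = true} \ {n | Y n = true} = ∅ := by
        ext n
        simp only [Set.mem_diff, Set.mem_setOf_eq, Set.mem_empty_iff_false, iff_false,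
          not_and, not_not]
        exact fun h => hXY n h
      rw [AlmostSubC, this]
      exact Set.finite_empty
    · -- nonempty
      exact ⟨fun _ => true, fun m => ⟨m, le_refl m, fun i _ _ => rfl⟩⟩
    · -- ≠ univ
      intro h
      have h0 : (fun _ => false : ℕ → Bool) ∈
          {Y : ℕ → Bool | ∀ m, ∃ k, m ≤ k ∧ ∀ i, a k ≤ i → i < a (k + 1) → Y i = true} := by
        rw [h]; exact Set.mem_univ _
      obtain ⟨k, _, hk⟩ := h0 0
      exact absurd (hk (a k) le_rfl (ham (Nat.lt_succ_self k))) (by simp)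
    · -- upward
      intro X Y hX hXY
      obtain ⟨N, hN⟩ := hXY.bddAbove
      intro m
      obtain ⟨k, hk1, hk2⟩ := hX (max m (N + 1))
      refine ⟨k, le_trans (le_max_left _ _) hk1, fun i h1 h2 => ?_⟩
      have hXi : X i = true := hk2 i h1 h2
      by_contra hYi
      have : i ∈ {n | X n = true} \ {n | Y n = true} :=
        ⟨hXi, by simpa using hYi⟩
      have hiN : i ≤ N := hN this
      have : N + 1 ≤ i :=
        le_trans (le_trans (le_max_right m (N + 1)) hk1) (le_trans ham.le_apply h1)
      omega
    · -- Gδ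
      have hBlk : ∀ k, IsOpen {Y : ℕ → Bool | ∀ i, a k ≤ i → i < a (k + 1) → Y i = true} := by
        intro k
        have h : {Y : ℕ → Bool | ∀ i, a k ≤ i → i < a (k + 1) → Y i = true} =
            ⋂ i : Fin (a (k + 1)), {Y : ℕ → Bool | a k ≤ (i : ℕ) → Y i = true} := by
          ext Y
          simp only [Set.mem_setOf_eq, Set.mem_iInter]
          exact ⟨fun h i hi => h i hi i.2, fun h i h1 h2 => h ⟨i, h2⟩ h1⟩
        rw [h]
        refine isOpen_iInter_of_finite fun i => ?_
        by_cases hi : a k ≤ (i : ℕ)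
        · have : {Y : ℕ → Bool | a k ≤ (i : ℕ) → Y i = true} =
              (fun Y : ℕ → Bool => Y (i : ℕ)) ⁻¹' {true} := by
            ext Y; simp [hi]
          rw [this]
          exact (isOpen_discrete _).preimage (continuous_apply (i : ℕ))
        · have : {Y : ℕ → Bool | a k ≤ (i : ℕ) → Y i = true} = Set.univ := by
            ext Y; simp [hi]
          rw [this]
          exact isOpen_univ
      have hGeq : {Y : ℕ → Bool | ∀ m, ∃ k, m ≤ k ∧ ∀ i, a k ≤ i → i < a (k + 1) → Y i = true} =
          ⋂ m, ⋃ k, ⋃ (_ : m ≤ k),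
            {Y : ℕ → Bool | ∀ i, a k ≤ i → i < a (k + 1) → Y i = true} := by
        ext Y
        simp only [Set.mem_setOf_eq, Set.mem_iInter, Set.mem_iUnion]
        constructor
        · intro h m; obtain ⟨k, h1, h2⟩ := h m; exact ⟨k, h1, h2⟩
        · intro h m; obtain ⟨k, h1, h2⟩ := h m; exact ⟨k, h1, h2⟩
      rw [hGeq]
      exact IsGδ.iInter fun m =>
        ((isOpen_iUnion fun k => isOpen_iUnion fun _ => hBlk k)).isGδ
  · rintro ⟨G, hGS, hGsf, hGδ⟩
    have hdense : Dense G := by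
      obtain ⟨X₀, hX₀⟩ := hGsf.1
      rw [dense_iff_inter_open]
      intro U hU hUne
      obtain ⟨x, hx⟩ := hUne
      obtain ⟨I, u, h1, h2⟩ := isOpen_pi_iff.mp hU x hx
      refine ⟨fun i => if i ∈ I then x i else true, h2 ?_, ?_⟩
      · intro i hi
        have hi' : i ∈ I := hi
        show (if i ∈ I then x i else true) ∈ u i
        rw [if_pos hi']
        exact (h1 i hi').2
      · refine hGsf.2.2 X₀ _ hX₀ ?_
        refine Set.Finite.subset I.finite_toSet ?_
        intro n hn
        obtain ⟨hn1, hn2⟩ := hn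
        simp only [Set.mem_setOf_eq] at hn2
        by_contra hnI
        apply hn2
        have hnI' : n ∉ I := fun h => hnI (Finset.mem_coe.mpr h)
        show (if n ∈ I then x n else true) = true
        rw [if_neg hnI']
    rw [IsMeagre, compl_compl, mem_residual]
    exact ⟨G, hGS, hGδ, hdense⟩
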